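/- Let M be a topological space and f : M → M a continuous involution. Define Rot : P_f M → P_f M by Rot(c)(t) = c(t + 1/2) for t ∈ [0, 1/2] and Rot(c)(t) = f(c(t − 1/2)) for t ∈ [1/2, 1]. Then: (i) Rot is a well-defined continuous self-map of P_f M (it equals the time-1/4 map of the circle action χ_f on P_f M); (ii) Rot is homotopic to the identity of P_f M; and (iii) for every loop γ ∈ Λ M and every σ ∈ P_f M with γ(0) = σ(0), one has concat(γ, σ) ∈ P_f M and Rot(concat(γ, σ)) = concat(σ, f ∘ γ). -/

import Mathlib

open unitInterval

/-- For an involution `f` of `M`, the rotation map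
`Rot(c)(t) = c(t + 1/2)` for `t ≤ 1/2`, `Rot(c)(t) = f(c(t − 1/2))` for `t ≥ 1/2`, is a
well-defined continuous self-map of `P_f M`, it is homotopic to the identity of `P_f M`,
and for a loop `γ` and `σ ∈ P_f M` with `γ(0) = σ(0)` one has
`concat(γ, σ) ∈ P_f M` and `Rot(concat(γ, σ)) = concat(σ, f ∘ γ)`. -/
theorem stmt_15 {M : Type} [TopologicalSpace M] (f : C(M, M)) (hf : ∀ x, f (f x) = x) :
    ∃ Rot : C({γ : C(I, M) // γ 1 = f (γ 0)}, {γ : C(I, M) // γ 1 = f (γ 0)}),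
      -- (i) the defining piecewise formula
      (∀ (c : {γ : C(I, M) // γ 1 = f (γ 0)}) (t : I),
        ((t : ℝ) ≤ 1 / 2 →
          (Rot c).1 t = c.1 (Set.projIcc (0 : ℝ) 1 zero_le_one ((t : ℝ) + 1 / 2))) ∧
        (1 / 2 ≤ (t : ℝ) →
          (Rot c).1 t = f (c.1 (Set.projIcc (0 : ℝ) 1 zero_le_one ((t : ℝ) - 1 / 2))))) ∧
      -- (ii) `Rot` is homotopic to the identity
      Rot.Homotopic (ContinuousMap.id _) ∧
      -- (iii) for every loop `γ` and every `σ ∈ P_f M` with `γ(0) = σ(0)` the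
      -- concatenation `concat(γ, σ)` lies in `P_f M` and is mapped by `Rot` to
      -- `concat(σ, f ∘ γ)`
      (∀ (γ : C(I, M)), γ 0 = γ 1 → ∀ sg : {γ : C(I, M) // γ 1 = f (γ 0)},
        γ 0 = sg.1 0 →
        ∀ cc : C(I, M),
          ((∀ t : I, (t : ℝ) ≤ 1 / 2 →
              cc t = γ (Set.projIcc (0 : ℝ) 1 zero_le_one (2 * (t : ℝ)))) ∧
           (∀ t : I, 1 / 2 ≤ (t : ℝ) →
              cc t = sg.1 (Set.projIcc (0 : ℝ) 1 zero_le_one (2 * (t : ℝ) - 1)))) →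
          ∃ hcc : cc 1 = f (cc 0),
            ∀ t : I,
              ((t : ℝ) ≤ 1 / 2 →
                (Rot ⟨cc, hcc⟩).1 t =
                  sg.1 (Set.projIcc (0 : ℝ) 1 zero_le_one (2 * (t : ℝ)))) ∧
              (1 / 2 ≤ (t : ℝ) →
                (Rot ⟨cc, hcc⟩).1 t =
                  f (γ (Set.projIcc (0 : ℝ) 1 zero_le_one (2 * (t : ℝ) - 1))))) := by
  classical
  set e : ℝ → I := Set.projIcc (0 : ℝ) 1 zero_le_one with he_def
  have he : Continuous e := continuous_projIcc
  have hcoe : ∀ x : ℝ, 0 ≤ x → x ≤ 1 → ((e x : ℝ)) = x := by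
    intro x h0 h1
    simp [e, Set.coe_projIcc, min_eq_right h1, max_eq_right h0]
  have he1 : e 1 = 1 := by
    apply Subtype.ext; exact hcoe 1 zero_le_one le_rfl
  have he0 : e 0 = 0 := by
    apply Subtype.ext; exact hcoe 0 le_rfl zero_le_one
  have heid : ∀ t : I, e (t : ℝ) = t := by
    intro t; apply Subtype.ext; exact hcoe t t.2.1 t.2.2
  -- the uncurried homotopy
  let E : (I × {γ : C(I, M) // γ 1 = f (γ 0)}) × I → M := fun p =>
    if (p.2 : ℝ) + (p.1.1 : ℝ) / 2 ≤ 1 then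
      p.1.2.1 (e ((p.2 : ℝ) + (p.1.1 : ℝ) / 2))
    else f (p.1.2.1 (e ((p.2 : ℝ) + (p.1.1 : ℝ) / 2 - 1)))
  have harg : Continuous fun p : (I × {γ : C(I, M) // γ 1 = f (γ 0)}) × I =>
      (p.2 : ℝ) + (p.1.1 : ℝ) / 2 := by
    fun_prop
  have hcval : Continuous fun p : (I × {γ : C(I, M) // γ 1 = f (γ 0)}) × I =>
      (p.1.2.1 : C(I, M)) := by
    fun_prop
  have hE : Continuous E := by
    apply Continuous.if_le
    · exact ContinuousEval.continuous_eval.comp (hcval.prodMk (he.comp harg))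
    · exact f.continuous.comp
        (ContinuousEval.continuous_eval.comp (hcval.prodMk (he.comp (harg.sub continuous_const))))
    · exact harg
    · exact continuous_const
    · intro p hp
      rw [hp, he1]
      have : (1 : ℝ) - 1 = 0 := by norm_num
      rw [this, he0, p.1.2.2]
  let Ecm : C((I × {γ : C(I, M) // γ 1 = f (γ 0)}) × I, M) := ⟨E, hE⟩
  have hmem : ∀ q : I × {γ : C(I, M) // γ 1 = f (γ 0)},
      Ecm.curry q 1 = f (Ecm.curry q 0) := by
    intro ⟨s, c⟩
    show E ((s, c), 1) = f (E ((s, c), 0))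
    have hs0 : (0 : ℝ) ≤ (s : ℝ) := s.2.1
    have hs1 : (s : ℝ) ≤ 1 := s.2.2
    simp only [E]
    rw [if_pos (by norm_num; linarith : ((0:I) : ℝ) + (s : ℝ) / 2 ≤ 1)]
    by_cases hs : ((1:I) : ℝ) + (s : ℝ) / 2 ≤ 1
    · rw [if_pos hs]
      have : (s : ℝ) = 0 := by norm_num at hs; linarith
      have h1 : ((1:I) : ℝ) + (s : ℝ) / 2 = 1 := by norm_num [this]
      have h0 : ((0:I) : ℝ) + (s : ℝ) / 2 = 0 := by norm_num [this]
      rw [h1, h0, he1, he0, c.2]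
    · rw [if_neg hs]
      have h1 : ((1:I) : ℝ) + (s : ℝ) / 2 - 1 = (s : ℝ) / 2 := by norm_num
      have h0 : ((0:I) : ℝ) + (s : ℝ) / 2 = (s : ℝ) / 2 := by norm_num
      rw [h1, h0]
  let F : C(I × {γ : C(I, M) // γ 1 = f (γ 0)}, {γ : C(I, M) // γ 1 = f (γ 0)}) :=
    ⟨fun q => ⟨Ecm.curry q, hmem q⟩, (Ecm.curry.continuous).subtype_mk _⟩
  let Rot : C({γ : C(I, M) // γ 1 = f (γ 0)}, {γ : C(I, M) // γ 1 = f (γ 0)}) :=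
    ⟨fun c => F (1, c), F.continuous.comp (continuous_const.prodMk continuous_id)⟩
  have hRotval : ∀ (c : {γ : C(I, M) // γ 1 = f (γ 0)}) (t : I),
      (Rot c).1 t = E ((1, c), t) := fun c t => rfl
  -- (i)
  have hi : ∀ (c : {γ : C(I, M) // γ 1 = f (γ 0)}) (t : I),
      ((t : ℝ) ≤ 1 / 2 → (Rot c).1 t = c.1 (e ((t : ℝ) + 1 / 2))) ∧
      (1 / 2 ≤ (t : ℝ) → (Rot c).1 t = f (c.1 (e ((t : ℝ) - 1 / 2)))) := by
    intro c t
    have h1coe : ((1:I) : ℝ) = 1 := rfl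
    constructor
    · intro ht
      rw [hRotval]
      show (if (t : ℝ) + ((1:I) : ℝ) / 2 ≤ 1 then _ else _) = _
      rw [if_pos (by rw [h1coe]; linarith)]
      norm_num
    · intro ht
      rw [hRotval]
      show (if (t : ℝ) + ((1:I) : ℝ) / 2 ≤ 1 then _ else _) = _
      rcases eq_or_lt_of_le ht with heq | hlt
      · rw [if_pos (by rw [h1coe]; linarith)]
        have h1 : (t : ℝ) + ((1:I) : ℝ) / 2 = 1 := by rw [h1coe]; linarith
        have h0 : (t : ℝ) - 1 / 2 = 0 := by linarith
        rw [h1, h0, he1, he0, c.2]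
      · rw [if_neg (by rw [h1coe]; intro h; linarith)]
        have : (t : ℝ) + ((1:I) : ℝ) / 2 - 1 = (t : ℝ) - 1 / 2 := by rw [h1coe]; ring
        rw [this]
  refine ⟨Rot, hi, ?_, ?_⟩
  · -- (ii) homotopic to identity
    refine ⟨⟨⟨fun q => F (unitInterval.symm q.1, q.2), ?_⟩, ?_, ?_⟩⟩
    · exact F.continuous.comp
        ((unitInterval.continuous_symm.comp continuous_fst).prodMk continuous_snd)
    · intro c
      show F (unitInterval.symm 0, c) = Rot c
      rw [unitInterval.symm_zero]
      rfl
    · intro c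
      show F (unitInterval.symm 1, c) = c
      rw [unitInterval.symm_one]
      apply Subtype.ext
      apply ContinuousMap.ext
      intro t
      show E ((0, c), t) = c.1 t
      show (if (t : ℝ) + ((0:I) : ℝ) / 2 ≤ 1 then _ else _) = _
      have h0coe : ((0:I) : ℝ) = 0 := rfl
      rw [if_pos (by rw [h0coe]; have := t.2.2; linarith)]
      have : (t : ℝ) + ((0:I) : ℝ) / 2 = (t : ℝ) := by rw [h0coe]; ring
      rw [this, heid]
  · -- (iii)
    intro γ hγ sg hgs cc ⟨hcc1, hcc2⟩
    have h1coe : ((1:I) : ℝ) = 1 := rfl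
    have h0coe : ((0:I) : ℝ) = 0 := rfl
    have hcc0 : cc 0 = sg.1 0 := by
      rw [hcc1 0 (by rw [h0coe]; norm_num)]
      have : 2 * ((0:I) : ℝ) = 0 := by rw [h0coe]; ring
      rw [this, he0, ← hgs]
    have hccend : cc 1 = f (cc 0) := by
      rw [hcc2 1 (by rw [h1coe]; norm_num), hcc0]
      have : 2 * ((1:I) : ℝ) - 1 = 1 := by rw [h1coe]; ring
      rw [this, he1, sg.2]
    refine ⟨hccend, ?_⟩
    intro t
    have ht0 : (0:ℝ) ≤ (t : ℝ) := t.2.1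
    have ht1 : (t : ℝ) ≤ 1 := t.2.2
    constructor
    · intro ht
      rw [(hi ⟨cc, hccend⟩ t).1 ht]
      show cc (e ((t : ℝ) + 1 / 2)) = _
      have hmem' : ((e ((t : ℝ) + 1 / 2)) : ℝ) = (t : ℝ) + 1 / 2 :=
        hcoe _ (by linarith) (by linarith)
      rw [hcc2 _ (by rw [hmem']; linarith), hmem']
      have : 2 * ((t : ℝ) + 1 / 2) - 1 = 2 * (t : ℝ) := by ring
      rw [this]
    · intro ht
      rw [(hi ⟨cc, hccend⟩ t).2 ht]
      show f (cc (e ((t : ℝ) - 1 / 2))) = _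
      have hmem' : ((e ((t : ℝ) - 1 / 2)) : ℝ) = (t : ℝ) - 1 / 2 :=
        hcoe _ (by linarith) (by linarith)
      rw [hcc1 _ (by rw [hmem']; linarith), hmem']
      have : 2 * ((t : ℝ) - 1 / 2) = 2 * (t : ℝ) - 1 := by ring
      rw [this]
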